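/- Let P be a Markov kernel on a measurable space X with invariant probability measure π, let Δ ⊆ X be measurable, and define the positive kernel P_Δ(x, A) := 1_Δ(x) P(x, A). Let g : X → ℝ be measurable with ∫ g² dπ < ∞, and write Pg(x) = ∫ g(y) P(x, dy), P_Δ g = 1_Δ · Pg. Then ∫ (P_Δ g)² dπ = ∫ g² dπ − ∫ [ ∫ (g(y) − Pg(x))² P(x, dy) ] π(dx) − ∫_{Δᶜ} (Pg)² dπ. -/

import Mathlib

open MeasureTheory ProbabilityTheory

/-- For the killed kernel `P_Δ g = 1_Δ · Pg`,
`‖P_Δ g‖²_π = ‖g‖²_π − E_π[conditional variance of g] − ‖1_{Δᶜ} Pg‖²_π`. -/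
theorem stmt_10
    {X : Type*} [MeasurableSpace X]
    (P : Kernel X X) [IsMarkovKernel P]
    (π : Measure X) [IsProbabilityMeasure π]
    (hinv : ∀ A : Set X, MeasurableSet A → ∫⁻ x, P x A ∂π = π A)
    (Δ : Set X) (hΔ : MeasurableSet Δ)
    (g : X → ℝ) (hg : Measurable g)
    (hg2 : Integrable (fun x => (g x) ^ 2) π)
    (Pg : X → ℝ) (hPg : ∀ x, Pg x = ∫ y, g y ∂(P x)) :
    ∫ x, (Δ.indicator Pg x) ^ 2 ∂π =
      ∫ x, (g x) ^ 2 ∂π -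
      ∫ x, (∫ y, (g y - Pg x) ^ 2 ∂(P x)) ∂π -
      ∫ x in Δᶜ, (Pg x) ^ 2 ∂π := by
  classical
  -- measurability of `Pg`
  have hPgm : Measurable Pg := by
    have h1 : StronglyMeasurable fun p : X × X => g p.2 :=
      hg.stronglyMeasurable.comp_measurable measurable_snd
    have h2 := h1.integral_kernel_prod_right' (κ := P)
    have : Pg = fun x => ∫ y, g y ∂(P x) := funext hPg
    rw [this]
    exact h2.measurable
  set f : X → ENNReal := fun y => ENNReal.ofReal (g y ^ 2) with hfdef
  have hfm : Measurable f := (hg.pow_const 2).ennreal_ofReal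
  -- invariance in bind form
  have hbind : π.bind (P : X → Measure X) = π := by
    ext A hA
    rw [Measure.bind_apply hA P.measurable.aemeasurable]
    exact hinv A hA
  have hlin : ∫⁻ x, ∫⁻ y, f y ∂(P x) ∂π = ∫⁻ y, f y ∂π := by
    conv_rhs => rw [← hbind]
    rw [Measure.lintegral_bind P.measurable.aemeasurable hfm.aemeasurable]
  have hfπ : ∫⁻ y, f y ∂π < ⊤ := by
    have h := hg2.hasFiniteIntegral
    rw [hasFiniteIntegral_iff_norm] at h
    refine lt_of_le_of_lt (le_of_eq ?_) h
    refine lintegral_congr fun y => ?_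
    rw [Real.norm_eq_abs, abs_of_nonneg (sq_nonneg _)]
  have hfin_ae : ∀ᵐ x ∂π, ∫⁻ y, f y ∂(P x) < ⊤ := by
    refine ae_lt_top (hfm.lintegral_kernel) ?_
    rw [hlin]; exact hfπ.ne
  -- a.e. integrability of g and g² w.r.t. P x
  have hint_ae : ∀ᵐ x ∂π, Integrable (fun y => g y ^ 2) (P x) ∧ Integrable g (P x) := by
    filter_upwards [hfin_ae] with x hx
    have hg2x : Integrable (fun y => g y ^ 2) (P x) := by
      refine ⟨(hg.pow_const 2).aestronglyMeasurable, ?_⟩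
      rw [hasFiniteIntegral_iff_norm]
      refine lt_of_le_of_lt (le_of_eq ?_) hx
      refine lintegral_congr fun y => ?_
      rw [Real.norm_eq_abs, abs_of_nonneg (sq_nonneg _)]
    refine ⟨hg2x, ?_⟩
    refine (hg2x.add (integrable_const 1)).mono' hg.aestronglyMeasurable ?_
    filter_upwards with y
    show ‖g y‖ ≤ g y ^ 2 + 1
    rw [Real.norm_eq_abs]
    nlinarith [sq_nonneg (|g y| - 1), sq_abs (g y)]
  set F : X → ℝ := fun x => (∫⁻ y, f y ∂(P x)).toReal with hFdef
  have hFm : Measurable F := hfm.lintegral_kernel.ennreal_toReal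
  have hFnonneg : ∀ x, 0 ≤ F x := fun x => ENNReal.toReal_nonneg
  -- F x = ∫ g² d(P x) a.e.
  have hF_eq : ∀ᵐ x ∂π, F x = ∫ y, g y ^ 2 ∂(P x) := by
    filter_upwards with x
    rw [integral_eq_lintegral_of_nonneg_ae (Filter.Eventually.of_forall fun y => sq_nonneg _)
      (hg.pow_const 2).aestronglyMeasurable]
  -- conditional variance identity a.e.
  have hvar : ∀ᵐ x ∂π, ∫ y, (g y - Pg x) ^ 2 ∂(P x) = F x - Pg x ^ 2 := by
    filter_upwards [hint_ae, hF_eq] with x ⟨hg2x, hgx⟩ hFx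
    have hexp : (fun y => (g y - Pg x) ^ 2)
        = fun y => g y ^ 2 - (2 * Pg x) * g y + Pg x ^ 2 := by
      funext y; ring
    have hmul : Integrable (fun y => (2 * Pg x) * g y) (P x) := hgx.const_mul _
    have hA : Integrable (fun y => g y ^ 2 - (2 * Pg x) * g y) (P x) := hg2x.sub hmul
    rw [hexp, integral_add hA (integrable_const _), integral_sub hg2x hmul,
      integral_const_mul, integral_const, ← hPg x, ← hFx]
    simp
    ring
  -- integrability of F over π, with ∫ F = ∫ g²
  have hFint : Integrable F π := by
    refine integrable_toReal_of_lintegral_ne_top hfm.lintegral_kernel.aemeasurable ?_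
    rw [hlin]; exact hfπ.ne
  have hFeq : ∫ x, F x ∂π = ∫ x, g x ^ 2 ∂π := by
    rw [integral_eq_lintegral_of_nonneg_ae (Filter.Eventually.of_forall hFnonneg)
      hFm.aestronglyMeasurable,
      integral_eq_lintegral_of_nonneg_ae (Filter.Eventually.of_forall fun x => sq_nonneg (g x))
      (hg.pow_const 2).aestronglyMeasurable]
    congr 1
    rw [← hlin]
    refine lintegral_congr_ae ?_
    filter_upwards [hfin_ae] with x hx
    exact ENNReal.ofReal_toReal hx.ne
  -- integrability of Pg² over π
  have hPg2le : ∀ᵐ x ∂π, Pg x ^ 2 ≤ F x := by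
    filter_upwards [hvar] with x hx
    have h0 : 0 ≤ ∫ y, (g y - Pg x) ^ 2 ∂(P x) :=
      integral_nonneg fun y => sq_nonneg _
    linarith [hx ▸ h0]
  have hPg2int : Integrable (fun x => Pg x ^ 2) π := by
    refine hFint.mono' ((hPgm.pow_const 2).aestronglyMeasurable) ?_
    filter_upwards [hPg2le] with x hx
    rw [Real.norm_eq_abs, abs_of_nonneg (sq_nonneg _)]
    exact hx
  -- integral of the conditional variance
  have hvarint : ∫ x, (∫ y, (g y - Pg x) ^ 2 ∂(P x)) ∂π
      = ∫ x, g x ^ 2 ∂π - ∫ x, Pg x ^ 2 ∂π := by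
    rw [integral_congr_ae hvar, integral_sub hFint hPg2int, hFeq]
  -- indicator manipulation
  have hind : ∫ x, (Δ.indicator Pg x) ^ 2 ∂π = ∫ x in Δ, Pg x ^ 2 ∂π := by
    rw [← integral_indicator hΔ]
    refine integral_congr_ae (Filter.Eventually.of_forall fun x => ?_)
    by_cases hx : x ∈ Δ
    · simp [Set.indicator_of_mem hx]
    · simp [Set.indicator_of_notMem hx]
  have hsplit : ∫ x in Δ, Pg x ^ 2 ∂π + ∫ x in Δᶜ, Pg x ^ 2 ∂π = ∫ x, Pg x ^ 2 ∂π :=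
    integral_add_compl hΔ hPg2int
  rw [hind, hvarint]
  linarith
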